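/- A subset Ψ of the untwisted affine root system Φ is a maximal closed subroot system of Φ with Gr(Ψ) ≠ Φ̊ if and only if there is a maximal closed subroot system M of Φ̊ such that Ψ = M̂ = {α + rδ : α ∈ M, r ∈ ℤ}. -/

import Mathlib

noncomputable section

variable {V : Type*} [NormedAddCommGroup V] [InnerProductSpace ℝ V]

/-- The Cartan pairing `⟨β, α∨⟩ = 2(β,α)/(α,α)`. -/
def cartanPair (α β : V) : ℝ := 2 * (inner ℝ β α : ℝ) / (inner ℝ α α : ℝ)

/-- The reflection `s_α` on `V`: `s_α(β) = β - ⟨β,α∨⟩ α`. -/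
def reflV (α β : V) : V := β - cartanPair α β • α

/-- The affine reflection `s_x` on `V × ℝ` with respect to the bilinear form
`B((x,a),(y,b)) = (x,y)`. -/
def reflA (x y : V × ℝ) : V × ℝ :=
  y - (2 * (inner ℝ y.1 x.1 : ℝ) / (inner ℝ x.1 x.1 : ℝ)) • x

/-- A finite irreducible reduced crystallographic root system in `V`. -/
structure IsIrreducibleRootSystem (R : Set V) : Prop where
  finite : R.Finite
  spans : Submodule.span ℝ R = ⊤
  zero_notMem : (0 : V) ∉ R
  reduced : ∀ α ∈ R, ∀ c : ℝ, c • α ∈ R → c = 1 ∨ c = -1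
  cartan_int : ∀ α ∈ R, ∀ β ∈ R, ∃ n : ℤ, cartanPair α β = (n : ℝ)
  refl_mem : ∀ α ∈ R, ∀ β ∈ R, reflV α β ∈ R
  irred : ∀ A B : Set V, R = A ∪ B → A.Nonempty → B.Nonempty →
    ∃ a ∈ A, ∃ b ∈ B, (inner ℝ a b : ℝ) ≠ 0

/-- A subroot system of a set `Φ` of affine roots: a nonempty proper subset stable
under the reflections `s_x`, `x ∈ Ψ`. -/
def IsSubrootSystem (Φ Ψ : Set (V × ℝ)) : Prop :=
  Ψ.Nonempty ∧ Ψ ⊆ Φ ∧ Ψ ≠ Φ ∧ ∀ x ∈ Ψ, ∀ y ∈ Ψ, reflA x y ∈ Ψ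

/-- `Ψ` is closed in `Φ`. -/
def IsClosedIn (Φ Ψ : Set (V × ℝ)) : Prop := ∀ x ∈ Ψ, ∀ y ∈ Ψ, x + y ∈ Φ → x + y ∈ Ψ

def IsClosedSubrootSystem (Φ Ψ : Set (V × ℝ)) : Prop :=
  IsSubrootSystem Φ Ψ ∧ IsClosedIn Φ Ψ

/-- A maximal closed subroot system of `Φ`: any closed subroot system of `Φ`
containing it equals it. -/
def IsMaximalClosedSubrootSystem (Φ Ψ : Set (V × ℝ)) : Prop :=
  IsClosedSubrootSystem Φ Ψ ∧ ∀ Δ, IsClosedSubrootSystem Φ Δ → Ψ ⊆ Δ → Δ = Ψ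

/-- A subroot system of a finite root system `R`. -/
def IsSubrootSystemF (R S : Set V) : Prop :=
  S.Nonempty ∧ S ⊆ R ∧ S ≠ R ∧ ∀ α ∈ S, ∀ β ∈ S, reflV α β ∈ S

/-- `S` is closed in the finite root system `R`. -/
def IsClosedInF (R S : Set V) : Prop := ∀ α ∈ S, ∀ β ∈ S, α + β ∈ R → α + β ∈ S

def IsMaximalClosedSubrootSystemF (R S : Set V) : Prop :=
  (IsSubrootSystemF R S ∧ IsClosedInF R S) ∧
    ∀ T, IsSubrootSystemF R T → IsClosedInF R T → S ⊆ T → T = S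

/-- A `ℤ`-linear function on `S`: the restriction to `S` of an additive group
homomorphism from the subgroup of `V` generated by `S` to `ℤ`. -/
def IsZLinearOn (S : Set V) (p : V → ℤ) : Prop :=
  ∃ f : AddSubgroup.closure S →+ ℤ,
    ∀ α, ∀ h : α ∈ S, p α = f ⟨α, AddSubgroup.subset_closure h⟩

/-- An irreducible subset: nonempty and not a union of two nonempty mutually
orthogonal subsets. -/
def IsIrreducibleSubset (S : Set V) : Prop :=
  S.Nonempty ∧ ∀ A B : Set V, S = A ∪ B → A.Nonempty → B.Nonempty →
    ∃ a ∈ A, ∃ b ∈ B, (inner ℝ a b : ℝ) ≠ 0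

/-- The untwisted affine root system attached to `R`. -/
def affineRS (R : Set V) : Set (V × ℝ) := {x | x.1 ∈ R ∧ ∃ r : ℤ, x.2 = (r : ℝ)}

/-- The gradient of a set of affine roots. -/
def Gr (Ψ : Set (V × ℝ)) : Set V := {α | ∃ r : ℤ, (α, (r : ℝ)) ∈ Ψ}

/-- `Z_α(Ψ) = {r ∈ ℤ : α + rδ ∈ Ψ}`. -/
def ZSet (Ψ : Set (V × ℝ)) (α : V) : Set ℤ := {r | (α, (r : ℝ)) ∈ Ψ}

/-- The difference set `{r - r' : r, r' ∈ Z_α(Ψ)}`. -/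
def DiffSet (Ψ : Set (V × ℝ)) (α : V) : Set ℤ :=
  {d | ∃ r ∈ ZSet Ψ α, ∃ r' ∈ ZSet Ψ α, d = r - r'}

/-- The lift `Ŝ = {α + rδ : α ∈ S, r ∈ ℤ}` of a subset `S` of the finite root system. -/
def liftF (S : Set V) : Set (V × ℝ) := {x | x.1 ∈ S ∧ ∃ r : ℤ, x.2 = (r : ℝ)}

section Statement5Aux

variable {V : Type*} [NormedAddCommGroup V] [InnerProductSpace ℝ V]

lemma ip_pos {R : Set V} (hR : IsIrreducibleRootSystem R) {α : V} (hα : α ∈ R) :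
    0 < (inner ℝ α α : ℝ) := by
  have hne : α ≠ 0 := fun h => hR.zero_notMem (h ▸ hα)
  have h0 : (inner ℝ α α : ℝ) ≠ 0 := inner_self_ne_zero.mpr hne
  exact lt_of_le_of_ne real_inner_self_nonneg (Ne.symm h0)

lemma cartan_self {R : Set V} (hR : IsIrreducibleRootSystem R) {α : V} (hα : α ∈ R) :
    cartanPair α α = 2 := by
  unfold cartanPair
  rw [mul_div_assoc, div_self (ip_pos hR hα).ne', mul_one]

lemma reflV_self {R : Set V} (hR : IsIrreducibleRootSystem R) {α : V} (hα : α ∈ R) :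
    reflV α α = -α := by
  rw [reflV, cartan_self hR hα, two_smul]
  abel

lemma neg_mem {R : Set V} (hR : IsIrreducibleRootSystem R) {α : V} (hα : α ∈ R) :
    -α ∈ R := by
  have := hR.refl_mem α hα α hα
  rwa [reflV_self hR hα] at this

lemma pair_add_eq (α β : V) (r s : ℤ) :
    ((α, ((r:ℤ):ℝ)) + (β, ((s:ℤ):ℝ))) = (α + β, ((r + s : ℤ):ℝ)) := by
  rw [Prod.mk_add_mk]
  congr 1
  push_cast; ring

lemma root_add {R : Set V} (hR : IsIrreducibleRootSystem R) {α β : V}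
    (hα : α ∈ R) (hβ : β ∈ R) (hneg : (inner ℝ α β : ℝ) < 0) (hne : α + β ≠ 0) :
    α + β ∈ R := by
  obtain ⟨n, hn⟩ := hR.cartan_int α hα β hβ
  obtain ⟨m, hm⟩ := hR.cartan_int β hβ α hα
  have hαα := ip_pos hR hα
  have hββ := ip_pos hR hβ
  have hba : (inner ℝ β α : ℝ) = inner ℝ α β := real_inner_comm α β
  have h1 : 2 * (inner ℝ β α : ℝ) = n * inner ℝ α α := by
    have h := hn; unfold cartanPair at h
    field_simp at h; linarith
  have h2 : 2 * (inner ℝ α β : ℝ) = m * inner ℝ β β := by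
    have h := hm; unfold cartanPair at h
    field_simp at h; linarith
  have hn0 : n < 0 := by
    have : (n : ℝ) < 0 := by nlinarith
    exact_mod_cast this
  have hm0 : m < 0 := by
    have : (m : ℝ) < 0 := by nlinarith
    exact_mod_cast this
  have hCS := real_inner_mul_inner_self_le α β
  have h3 : ((n:ℝ) * inner ℝ α α) * ((m:ℝ) * inner ℝ β β) = 4 * ((inner ℝ α β : ℝ) * inner ℝ α β) := by
    rw [← h1, ← h2, hba]; ring
  have hkey : (n : ℝ) * m ≤ 4 := by nlinarith [mul_pos hαα hββ, h3, hCS]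
  have hkeyZ : n * m ≤ 4 := by exact_mod_cast hkey
  by_cases hn1 : n = -1
  · have := hR.refl_mem α hα β hβ
    rw [reflV, hn, hn1] at this
    simp only [Int.cast_neg, Int.cast_one, neg_smul, one_smul, sub_neg_eq_add] at this
    rwa [add_comm]
  · by_cases hm1 : m = -1
    · have := hR.refl_mem β hβ α hα
      rw [reflV, hm, hm1] at this
      simpa only [Int.cast_neg, Int.cast_one, neg_smul, one_smul, sub_neg_eq_add] using this
    · exfalso
      have hn2 : n ≤ -2 := by omega
      have hm2 : m ≤ -2 := by omega
      have hnm : n = -2 ∧ m = -2 := by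
        have hn3 : n ≥ -2 := by nlinarith
        have hm3 : m ≥ -2 := by nlinarith
        omega
      have hn' : (n : ℝ) = -2 := by exact_mod_cast congrArg (Int.cast : ℤ → ℝ) hnm.1
      have hm' : (m : ℝ) = -2 := by exact_mod_cast congrArg (Int.cast : ℤ → ℝ) hnm.2
      apply hne
      rw [← @inner_self_eq_zero ℝ]
      have hexp := real_inner_add_add_self α β
      have : (inner ℝ (α + β) (α + β) : ℝ) = 0 := by
        rw [hexp]; nlinarith
      exact this

lemma reflA_eq (α β : V) (x y : ℝ) :
    reflA (α, x) (β, y) = (reflV α β, y - cartanPair α β * x) := by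
  unfold reflA reflV cartanPair
  simp [Prod.ext_iff, smul_eq_mul]

lemma lift_mono {S T : Set V} (h : S ⊆ T) : liftF S ⊆ liftF T :=
  fun x hx => ⟨h hx.1, hx.2⟩

lemma gr_lift (S : Set V) : Gr (liftF S) = S := by
  ext α
  constructor
  · rintro ⟨r, hr, -⟩; exact hr
  · intro hα; exact ⟨0, hα, 0, rfl⟩

lemma gr_mono {Ψ Δ : Set (V × ℝ)} (h : Ψ ⊆ Δ) : Gr Ψ ⊆ Gr Δ :=
  fun α ⟨r, hr⟩ => ⟨r, h hr⟩

lemma lift_ne {R S : Set V} (hsub : S ⊆ R) (hne : S ≠ R) : liftF S ≠ affineRS R := by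
  obtain ⟨γ, hγR, hγS⟩ := Set.exists_of_ssubset (hsub.ssubset_of_ne hne)
  intro h
  have : (γ, ((0:ℤ):ℝ)) ∈ liftF S := h ▸ ⟨hγR, 0, rfl⟩
  exact hγS this.1

lemma lift_closed_subroot {R S : Set V} (hR : IsIrreducibleRootSystem R)
    (hS : IsSubrootSystemF R S) (hSc : IsClosedInF R S) :
    IsClosedSubrootSystem (affineRS R) (liftF S) := by
  obtain ⟨⟨α0, hα0⟩, hsub, hne, hrefl⟩ := hS
  refine ⟨⟨⟨(α0, ((0:ℤ):ℝ)), hα0, 0, rfl⟩, fun x hx => ⟨hsub hx.1, hx.2⟩,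
    lift_ne hsub hne, ?_⟩, ?_⟩
  · rintro x ⟨hx1, r, hx2⟩ y ⟨hy1, s, hy2⟩
    obtain ⟨n, hn⟩ := hR.cartan_int x.1 (hsub hx1) y.1 (hsub hy1)
    have hx : x = (x.1, (r : ℝ)) := by rw [← hx2]
    have hy : y = (y.1, (s : ℝ)) := by rw [← hy2]
    rw [hx, hy, reflA_eq]
    exact ⟨hrefl x.1 hx1 y.1 hy1, s - n * r, by push_cast [hn]; ring⟩
  · rintro x ⟨hx1, r, hx2⟩ y ⟨hy1, s, hy2⟩ hxy
    exact ⟨hSc x.1 hx1 y.1 hy1 hxy.1, r + s, by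
      show x.2 + y.2 = _
      rw [hx2, hy2]; push_cast; ring⟩

lemma grad_subroot {R : Set V} (hR : IsIrreducibleRootSystem R) {Ψ : Set (V × ℝ)}
    (hΨ : IsClosedSubrootSystem (affineRS R) Ψ) :
    (Gr Ψ).Nonempty ∧ Gr Ψ ⊆ R ∧ (∀ α ∈ Gr Ψ, ∀ β ∈ Gr Ψ, reflV α β ∈ Gr Ψ) ∧
      IsClosedInF R (Gr Ψ) := by
  obtain ⟨⟨⟨x0, hx0⟩, hsub, hne, hrefl⟩, hclosed⟩ := hΨ
  have hGrR : Gr Ψ ⊆ R := fun α ⟨r, hr⟩ => (hsub hr).1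
  refine ⟨?_, hGrR, ?_, ?_⟩
  · obtain ⟨hx1, r, hx2⟩ := hsub hx0
    refine ⟨x0.1, r, ?_⟩
    have : x0 = (x0.1, (r : ℝ)) := by rw [← hx2]
    rwa [← this]
  · rintro α ⟨r, hr⟩ β ⟨s, hs⟩
    obtain ⟨n, hn⟩ := hR.cartan_int α (hGrR ⟨r, hr⟩) β (hGrR ⟨s, hs⟩)
    have := hrefl _ hr _ hs
    rw [reflA_eq] at this
    refine ⟨s - n * r, ?_⟩
    have he : ((s:ℝ) - cartanPair α β * r) = ((s - n * r : ℤ) : ℝ) := by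
      push_cast [hn]; ring
    rwa [he] at this
  · rintro α ⟨r, hr⟩ β ⟨s, hs⟩ hαβ
    have hmem : ((α, (r:ℝ)) + (β, (s:ℝ))) ∈ affineRS R := ⟨hαβ, r + s, by push_cast; rfl⟩
    have := hclosed _ hr _ hs hmem
    exact ⟨r + s, by
      have he : ((α, (r:ℝ)) + (β, (s:ℝ))) = (α + β, ((r + s : ℤ):ℝ)) := by
        rw [Prod.mk_add_mk]; push_cast; rfl
      rwa [he] at this⟩

lemma psi_subset_lift {R : Set V} {Ψ : Set (V × ℝ)} (hsub : Ψ ⊆ affineRS R) :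
    Ψ ⊆ liftF (Gr Ψ) := by
  intro x hx
  obtain ⟨hx1, r, hx2⟩ := hsub hx
  have hx' : x = (x.1, (r : ℝ)) := by rw [← hx2]
  exact ⟨⟨r, by rwa [← hx']⟩, r, hx2⟩

lemma saturation {R : Set V} (hR : IsIrreducibleRootSystem R) {Δ : Set (V × ℝ)}
    (hΔ : IsClosedSubrootSystem (affineRS R) Δ)
    (hfull : ∃ α ∈ R, ∀ r : ℤ, (α, (r:ℝ)) ∈ Δ)
    (hgr : ∀ γ ∈ R, ∃ s : ℤ, (γ, (s:ℝ)) ∈ Δ) :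
    Δ = affineRS R := by
  obtain ⟨⟨hΔne, hΔsub, hΔneq, hΔrefl⟩, hΔcl⟩ := hΔ
  set N : Set V := {β | β ∈ R ∧ ∀ r : ℤ, (β, (r:ℝ)) ∈ Δ} with hN
  obtain ⟨α0, hα0R, hα0f⟩ := hfull
  have hα0N : α0 ∈ N := ⟨hα0R, hα0f⟩
  -- N is symmetric
  have hNneg : ∀ β ∈ N, -β ∈ N := by
    rintro β ⟨hβR, hβf⟩
    refine ⟨neg_mem hR hβR, fun r => ?_⟩
    have := hΔrefl _ (hβf (-r)) _ (hβf (-r))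
    rw [reflA_eq, reflV_self hR hβR, cartan_self hR hβR] at this
    have he : (((-r : ℤ):ℝ) - 2 * ((-r:ℤ):ℝ)) = ((r:ℤ):ℝ) := by push_cast; ring
    rwa [he] at this
  -- absorption, negative inner product case
  have habsneg : ∀ β ∈ N, ∀ γ ∈ R, (inner ℝ β γ : ℝ) < 0 → γ ∈ N := by
    rintro β ⟨hβR, hβf⟩ γ hγR hneg
    by_cases hγβ : γ = -β
    · rw [hγβ]; exact hNneg β ⟨hβR, hβf⟩
    · have hne : β + γ ≠ 0 := fun h => hγβ (eq_neg_of_add_eq_zero_left (by rwa [add_comm] at h))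
      have hβγR : β + γ ∈ R := root_add hR hβR hγR hneg hne
      obtain ⟨s, hs⟩ := hgr γ hγR
      have hstep : ∀ t : ℤ, (β + γ, (t:ℝ)) ∈ Δ := by
        intro t
        have he : ((β, ((t - s : ℤ):ℝ)) + (γ, ((s:ℤ):ℝ))) = (β + γ, ((t:ℤ):ℝ)) := by
          rw [pair_add_eq, Int.sub_add_cancel]
        have hmem : ((β, ((t - s : ℤ):ℝ)) + (γ, ((s:ℤ):ℝ))) ∈ affineRS R := by
          rw [he]; exact ⟨hβγR, t, rfl⟩
        have := hΔcl _ (hβf (t - s)) _ hs hmem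
        rwa [he] at this
      obtain ⟨hmβR, hmβf⟩ := hNneg β ⟨hβR, hβf⟩
      refine ⟨hγR, fun u => ?_⟩
      have he : ((β + γ, ((u:ℤ):ℝ)) + (-β, ((0:ℤ):ℝ))) = (γ, ((u:ℤ):ℝ)) := by
        rw [Prod.mk_add_mk]
        congr 1
        · abel
        · push_cast; ring
      have hmem : ((β + γ, ((u:ℤ):ℝ)) + (-β, ((0:ℤ):ℝ))) ∈ affineRS R := by
        rw [he]; exact ⟨hγR, u, rfl⟩
      have := hΔcl _ (hstep u) _ (hmβf 0) hmem
      rwa [he] at this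
  -- absorption
  have habs : ∀ β ∈ N, ∀ γ ∈ R, (inner ℝ β γ : ℝ) ≠ 0 → γ ∈ N := by
    intro β hβ γ hγR hne
    rcases lt_or_gt_of_ne hne with h | h
    · exact habsneg β hβ γ hγR h
    · refine habsneg (-β) (hNneg β hβ) γ hγR ?_
      rw [inner_neg_left]
      simpa using by linarith
  -- N = R
  have hNR : ∀ β ∈ R, β ∈ N := by
    by_contra h
    push_neg at h
    obtain ⟨b0, hb0R, hb0N⟩ := h
    have hNsubR : N ⊆ R := fun β hβ => hβ.1
    have hsplit : R = N ∪ (R \ N) := by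
      ext β
      constructor
      · intro hβ
        by_cases hβN : β ∈ N
        · exact Or.inl hβN
        · exact Or.inr ⟨hβ, hβN⟩
      · rintro (hβ | hβ)
        · exact hNsubR hβ
        · exact hβ.1
    obtain ⟨a, ha, b, hb, hab⟩ := hR.irred N (R \ N) hsplit ⟨α0, hα0N⟩ ⟨b0, hb0R, hb0N⟩
    exact hb.2 (habs a ha b hb.1 hab)
  -- conclude
  apply Set.Subset.antisymm hΔsub
  rintro x ⟨hx1, r, hx2⟩
  have hx : x = (x.1, (r : ℝ)) := by rw [← hx2]
  rw [hx]
  exact (hNR x.1 hx1).2 r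

end Statement5Aux
/-- `Ψ` is a maximal closed subroot system of the untwisted affine
root system with `Gr(Ψ) ≠ Φ̊` iff `Ψ` is the lift of a maximal closed subroot
system of `Φ̊`. -/
theorem statement5
    {V : Type*} [NormedAddCommGroup V] [InnerProductSpace ℝ V] [FiniteDimensional ℝ V]
    (R : Set V) (hR : IsIrreducibleRootSystem R) (Ψ : Set (V × ℝ)) :
    (IsMaximalClosedSubrootSystem (affineRS R) Ψ ∧ Gr Ψ ≠ R) ↔
      ∃ M : Set V, IsMaximalClosedSubrootSystemF R M ∧ Ψ = liftF M := by
  constructor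
  · rintro ⟨⟨hΨcss, hΨmax⟩, hgr⟩
    obtain ⟨hSne, hSsub, hSrefl, hScl⟩ := grad_subroot hR hΨcss
    have hSsrs : IsSubrootSystemF R (Gr Ψ) := ⟨hSne, hSsub, hgr, hSrefl⟩
    have hliftS := lift_closed_subroot hR hSsrs hScl
    have hΨeq : liftF (Gr Ψ) = Ψ :=
      hΨmax _ hliftS (psi_subset_lift hΨcss.1.2.1)
    refine ⟨Gr Ψ, ⟨⟨hSsrs, hScl⟩, ?_⟩, hΨeq.symm⟩
    intro T hT hTc hST
    have hliftT := lift_closed_subroot hR hT hTc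
    have hsub : Ψ ⊆ liftF T := hΨeq ▸ lift_mono hST
    have hTΨ : liftF T = Ψ := hΨmax _ hliftT hsub
    rw [← gr_lift T, hTΨ]
  · rintro ⟨M, ⟨⟨hMsrs, hMcl⟩, hMmax⟩, rfl⟩
    have hMne := hMsrs.1
    have hMsub := hMsrs.2.1
    have hMneq := hMsrs.2.2.1
    refine ⟨⟨lift_closed_subroot hR hMsrs hMcl, ?_⟩, by rw [gr_lift]; exact hMneq⟩
    intro Δ hΔ hsub
    by_cases hGrΔ : Gr Δ = R
    · exfalso
      obtain ⟨α0, hα0⟩ := hMne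
      have hfull : ∃ α ∈ R, ∀ r : ℤ, (α, (r:ℝ)) ∈ Δ :=
        ⟨α0, hMsub hα0, fun r => hsub ⟨hα0, r, rfl⟩⟩
      have hgrΔ : ∀ γ ∈ R, ∃ s : ℤ, (γ, (s:ℝ)) ∈ Δ := by
        intro γ hγ
        rw [← hGrΔ] at hγ
        exact hγ
      exact hΔ.1.2.2.1 (saturation hR hΔ hfull hgrΔ)
    · obtain ⟨hDne, hDsub, hDrefl, hDcl⟩ := grad_subroot hR hΔ
      have hDsrs : IsSubrootSystemF R (Gr Δ) := ⟨hDne, hDsub, hGrΔ, hDrefl⟩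
      have hMD : M ⊆ Gr Δ := by
        intro α hα
        exact ⟨0, hsub ⟨hα, 0, rfl⟩⟩
      have hDM : Gr Δ = M := hMmax _ hDsrs hDcl hMD
      apply Set.Subset.antisymm
      · have := psi_subset_lift hΔ.1.2.1
        rwa [hDM] at this
      · exact hsub
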